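/- Consider the adaptive group testing model where only defects matter, with the genie construction of 𝓛 and 𝒦, and an estimator K̂ = K̂(Y_1,…,Y_T). Then I(𝒦 : K̂ ∣ 𝓛) ≤ Σ_{t=1}^{T} I( X_{𝒦∖𝓛,t} : Y_t ∣ X_{𝓛,t} ), where I denotes (conditional) mutual information. -/

import Mathlib

open Finset Real
open scoped Classical

noncomputable section

/-- The probability of an event `E` under a pmf `μ` on a finite sample space. -/
def prb {Ω : Type*} [Fintype Ω] (μ : Ω → ℝ) (E : Ω → Prop) : ℝ :=
  ∑ ω, if E ω then μ ω else 0

/-- `μ` is a probability mass function. -/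
def IsPmf {Ω : Type*} [Fintype Ω] (μ : Ω → ℝ) : Prop :=
  (∀ ω, 0 ≤ μ ω) ∧ ∑ ω, μ ω = 1

/-- The conditional pmf of `μ` given the event `E`. -/
def condPmf {Ω : Type*} [Fintype Ω] (μ : Ω → ℝ) (E : Ω → Prop) : Ω → ℝ :=
  fun ω => (if E ω then μ ω else 0) / prb μ E

/-- Shannon entropy (base-2 logarithms) of a probability mass function on a finite set. -/
def entPmf {α : Type*} [Fintype α] (p : α → ℝ) : ℝ :=
  - ∑ a : α, p a * Real.logb 2 (p a)

/-- Shannon entropy (base-2) of the random variable `X` under the pmf `μ`. -/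
def ent {Ω α : Type*} [Fintype Ω] [Fintype α] (μ : Ω → ℝ) (X : Ω → α) : ℝ :=
  - ∑ a : α, prb μ (fun ω => X ω = a) * Real.logb 2 (prb μ (fun ω => X ω = a))

/-- Conditional Shannon entropy `H(X ∣ Z) = Σ_z P(Z = z) · H(X ∣ Z = z)`. -/
def condEnt {Ω α γ : Type*} [Fintype Ω] [Fintype α] (μ : Ω → ℝ) (X : Ω → α) (Z : Ω → γ) : ℝ :=
  ∑ z ∈ Finset.univ.image Z,
    prb μ (fun ω => Z ω = z) * ent (condPmf μ (fun ω => Z ω = z)) X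

/-- Mutual information `I(X : Y) = H(X) + H(Y) − H(X,Y)` (base-2). -/
def mutInfo {Ω α β : Type*} [Fintype Ω] [Fintype α] [Fintype β]
    (μ : Ω → ℝ) (X : Ω → α) (Y : Ω → β) : ℝ :=
  ent μ X + ent μ Y - ent μ (fun ω => (X ω, Y ω))

/-- Conditional mutual information `I(X : Y ∣ Z) = Σ_z P(Z = z) · I(X : Y ∣ Z = z)`. -/
def condMutInfo {Ω α β γ : Type*} [Fintype Ω] [Fintype α] [Fintype β]
    (μ : Ω → ℝ) (X : Ω → α) (Y : Ω → β) (Z : Ω → γ) : ℝ :=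
  ∑ z ∈ Finset.univ.image Z,
    prb μ (fun ω => Z ω = z) * mutInfo (condPmf μ (fun ω => Z ω = z)) X Y

/-- The `K`-element subsets of `{1, …, N}`. -/
abbrev KSets (N K : ℕ) := {S : Finset (Fin N) // S.card = K}

/-- The outcomes of the tests before test `t`. -/
def prevOut {T : ℕ} {Y : Type*} (y : Fin T → Y) (t : Fin T) : Fin t.val → Y :=
  fun s => y ⟨s.val, s.isLt.trans t.isLt⟩

/-- `numDef x S y t` is `k_t`: the number of defective items (members of `S`) in the pool of
test `t`, when the adaptive strategy `x` is used and the test outcomes are `y`. -/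
def numDef {N T : ℕ} {Y : Type*} (x : (t : Fin T) → (Fin t.val → Y) → Fin N → Bool)
    (S : Finset (Fin N)) (y : Fin T → Y) (t : Fin T) : ℕ :=
  (S.filter (fun i => x t (prevOut y t) i = true)).card

/-- The joint pmf of the defective set `𝒦` (uniform over `K`-subsets of `{1,…,N}`) and the
test outcomes `Y_1, …, Y_T` of the adaptive strategy `x`, in the model where only defects
matter: conditionally on `𝒦` and the previous outcomes, `Y_t` has distribution `ν (k_t)`. -/
def gtPmf (N K T : ℕ) (Y : Type*) [Fintype Y] (ν : ℕ → Y → ℝ)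
    (x : (t : Fin T) → (Fin t.val → Y) → Fin N → Bool) :
    KSets N K × (Fin T → Y) → ℝ :=
  fun ω => (1 / (N.choose K : ℝ)) * ∏ t : Fin T, ν (numDef x ω.1.val ω.2 t) (ω.2 t)

/-- The joint pmf of the genie construction: `𝓛` uniform over `ℓ`-subsets of `{1,…,N}`;
conditionally on `𝓛`, the defective set `𝒦` uniform over the `K`-subsets containing `𝓛`;
and the test outcomes of the adaptive strategy `x`, in the model where only defects matter. -/
def geniePmf (N K L T : ℕ) (Y : Type*) [Fintype Y] (ν : ℕ → Y → ℝ)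
    (x : (t : Fin T) → (Fin t.val → Y) → Fin N → Bool) :
    KSets N L × KSets N K × (Fin T → Y) → ℝ :=
  fun ω =>
    (if ω.1.val ⊆ ω.2.1.val then
      (1 / (N.choose L : ℝ)) * (1 / ((N - L).choose (K - L) : ℝ))
    else 0) * ∏ t : Fin T, ν (numDef x ω.2.1.val ω.2.2 t) (ω.2.2 t)

/-- `XS S v` records the pair `(S, (v_i)_{i ∈ S})`: the set `S` together with the
restriction of `v` to `S`. -/
def XS {N : ℕ} (S : Finset (Fin N)) (v : Fin N → Bool) :
    Finset (Fin N) × (Fin N → Option Bool) :=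
  (S, fun i => if i ∈ S then some (v i) else none)

end
noncomputable section InfoLib

/-- `p * logb 2 p`, the building block of entropy. -/
def phi (p : ℝ) : ℝ := p * Real.logb 2 p

lemma phi_zero : phi 0 = 0 := by simp [phi]

lemma phi_one : phi 1 = 0 := by simp [phi]

lemma phi_mul (a b : ℝ) : phi (a * b) = b * phi a + a * phi b := by
  rcases eq_or_ne a 0 with rfl | ha
  · simp [phi]
  rcases eq_or_ne b 0 with rfl | hb
  · simp [phi]
  · simp only [phi, Real.logb_mul ha hb]; ring

lemma phi_div {c : ℝ} (hc : c ≠ 0) (a : ℝ) :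
    phi (a / c) = phi a / c - (a / c) * Real.logb 2 c := by
  rcases eq_or_ne a 0 with rfl | ha
  · simp [phi]
  · simp only [phi, Real.logb_div ha hc]; ring

section Basics

variable {Ω : Type*} [Fintype Ω] {μ : Ω → ℝ} {E F : Ω → Prop}

lemma prb_nonneg (hμ : ∀ ω, 0 ≤ μ ω) (E : Ω → Prop) : 0 ≤ prb μ E :=
  Finset.sum_nonneg fun ω _ => by by_cases h : E ω <;> simp [h, hμ ω]

lemma prb_congr (h : ∀ ω, E ω ↔ F ω) : prb μ E = prb μ F :=
  Finset.sum_congr rfl fun ω _ => by simp [h ω]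

lemma prb_mono (hμ : ∀ ω, 0 ≤ μ ω) (h : ∀ ω, E ω → F ω) : prb μ E ≤ prb μ F := by
  refine Finset.sum_le_sum fun ω _ => ?_
  by_cases hE : E ω
  · simp [hE, h ω hE]
  · by_cases hF : F ω <;> simp [hE, hF, hμ ω]

lemma prb_empty (h : ∀ ω, ¬ E ω) : prb μ E = 0 := by
  unfold prb
  refine Finset.sum_eq_zero fun ω _ => by simp [h ω]

lemma prb_true : prb μ (fun _ => True) = ∑ ω, μ ω := by simp [prb]

lemma prb_fiber {α : Type*} [Fintype α] (X : Ω → α) (E : Ω → Prop) :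
    ∑ a, prb μ (fun ω => X ω = a ∧ E ω) = prb μ E := by
  unfold prb
  rw [Finset.sum_comm]
  refine Finset.sum_congr rfl fun ω _ => ?_
  by_cases hE : E ω
  · simp only [hE, and_true]
    rw [Finset.sum_ite_eq Finset.univ (X ω) (fun _ => μ ω)]
    simp
  · simp [hE]

lemma sum_prb_fiber_eq_one {α : Type*} [Fintype α] (hμ : IsPmf μ) (X : Ω → α) :
    ∑ a, prb μ (fun ω => X ω = a) = 1 := by
  have := prb_fiber (μ := μ) X (fun _ => True)
  simpa [prb_true, hμ.2] using this

lemma prb_pair_eq {α β : Type*} (X : Ω → α) (Y : Ω → β) (a : α) (b : β) :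
    prb μ (fun ω => (X ω, Y ω) = (a, b)) = prb μ (fun ω => X ω = a ∧ Y ω = b) :=
  prb_congr fun ω => by simp [Prod.ext_iff]

lemma prb_condPmf (E F : Ω → Prop) :
    prb (condPmf μ E) F = prb μ (fun ω => E ω ∧ F ω) / prb μ E := by
  unfold prb condPmf
  rw [Finset.sum_div]
  refine Finset.sum_congr rfl fun ω _ => ?_
  by_cases hE : E ω <;> by_cases hF : F ω <;> simp [hE, hF, prb]

lemma isPmf_condPmf (hμ : ∀ ω, 0 ≤ μ ω) (E : Ω → Prop) (hE : prb μ E ≠ 0) :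
    IsPmf (condPmf μ E) := by
  constructor
  · intro ω
    unfold condPmf
    have h0 : 0 ≤ prb μ E := prb_nonneg hμ E
    by_cases h : E ω
    · exact div_nonneg (by simp [h, hμ ω]) h0
    · simp [h]
  · unfold condPmf
    rw [← Finset.sum_div]
    exact div_self hE

end Basics

end InfoLib
noncomputable section IndLib

/-- Indicator: `ind p a = a` if `p` holds, `0` otherwise (classical). -/
def ind (p : Prop) (a : ℝ) : ℝ := if p then a else 0

lemma ind_pos {p : Prop} (h : p) (a : ℝ) : ind p a = a := if_pos h

lemma ind_neg {p : Prop} (h : ¬ p) (a : ℝ) : ind p a = 0 := if_neg h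

lemma ind_congr {p q : Prop} (h : p ↔ q) (a : ℝ) : ind p a = ind q a := by
  by_cases hp : p
  · rw [ind_pos hp, ind_pos (h.mp hp)]
  · rw [ind_neg hp, ind_neg (fun hq => hp (h.mpr hq))]

lemma ind_mul_left (p : Prop) (c a : ℝ) : ind p (c * a) = c * ind p a := by
  by_cases hp : p
  · rw [ind_pos hp, ind_pos hp]
  · rw [ind_neg hp, ind_neg hp, mul_zero]

lemma sum_ind_eq {α : Type*} [Fintype α] (c0 : α) (f : α → ℝ) :
    ∑ c, ind (c = c0) (f c) = f c0 := by
  classical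
  rw [Finset.sum_eq_single c0]
  · exact ind_pos rfl _
  · intro b _ hb
    exact ind_neg hb _
  · intro h
    exact absurd (Finset.mem_univ c0) h

lemma prb_eq_ind {Ω : Type*} [Fintype Ω] (μ : Ω → ℝ) (E : Ω → Prop) :
    prb μ E = ∑ ω, ind (E ω) (μ ω) := rfl

end IndLib
noncomputable section EntLib

variable {Ω : Type*} [Fintype Ω] {μ : Ω → ℝ}

lemma ent_eq_phi {α : Type*} [Fintype α] (X : Ω → α) :
    ent μ X = - ∑ a : α, phi (prb μ (fun ω => X ω = a)) := rfl

lemma prb_eq_zero_of_not_mem_image {α : Type*} (X : Ω → α) {a : α}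
    (ha : a ∉ Finset.univ.image X) : prb μ (fun ω => X ω = a) = 0 := by
  refine prb_empty fun ω h => ha ?_
  exact Finset.mem_image.mpr ⟨ω, Finset.mem_univ ω, h⟩

lemma ent_eq_sum_image {α : Type*} [Fintype α] (X : Ω → α) :
    ent μ X = - ∑ a ∈ Finset.univ.image X, phi (prb μ (fun ω => X ω = a)) := by
  rw [ent_eq_phi, neg_inj]
  symm
  refine Finset.sum_subset (Finset.subset_univ _) fun a _ ha => ?_
  rw [prb_eq_zero_of_not_mem_image X ha, phi_zero]

/-- Two random variables with the same "fibers" have the same entropy. -/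
lemma ent_congr {α β : Type*} [Fintype α] [Fintype β] {X : Ω → α} {X' : Ω → β}
    (h : ∀ ω ω', X ω = X ω' ↔ X' ω = X' ω') : ent μ X = ent μ X' := by
  rw [ent_eq_sum_image, ent_eq_sum_image, neg_inj]
  have key : ∀ a ∈ Finset.univ.image X, ∃ ω, X ω = a := by
    intro a ha
    rcases Finset.mem_image.mp ha with ⟨ω, _, hω⟩
    exact ⟨ω, hω⟩
  refine Finset.sum_bij (fun a ha => X' (key a ha).choose) ?_ ?_ ?_ ?_
  · intro a ha
    exact Finset.mem_image.mpr ⟨_, Finset.mem_univ _, rfl⟩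
  · intro a ha b hb hab
    have := (h _ _).mpr hab
    rw [(key a ha).choose_spec, (key b hb).choose_spec] at this
    exact this
  · intro b hb
    rcases Finset.mem_image.mp hb with ⟨ω, _, hω⟩
    have haX : X ω ∈ Finset.univ.image X :=
      Finset.mem_image.mpr ⟨ω, Finset.mem_univ ω, rfl⟩
    refine ⟨X ω, haX, ?_⟩
    have hc : X (key (X ω) haX).choose = X ω := (key _ haX).choose_spec
    exact ((h _ _).mp hc).trans hω
  · intro a ha
    congr 1
    refine prb_congr fun ω => ?_
    have hc := (key a ha).choose_spec
    constructor
    · intro hXa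
      exact (h ω _).mp (by rw [hXa, hc])
    · intro hX'
      rw [← hc]
      exact (h ω _).mpr hX'

lemma ent_pair_phi {α γ : Type*} [Fintype α] [Fintype γ] (X : Ω → α) (Z : Ω → γ) :
    ent μ (fun ω => (X ω, Z ω))
      = - ∑ z : γ, ∑ a : α, phi (prb μ (fun ω => X ω = a ∧ Z ω = z)) := by
  rw [ent_eq_phi, Fintype.sum_prod_type, neg_inj, Finset.sum_comm]
  exact Finset.sum_congr rfl fun z _ => Finset.sum_congr rfl fun a _ => by
    rw [prb_pair_eq]

/-- Chain rule for entropy: `H(X ∣ Z) = H(X, Z) − H(Z)`. -/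
lemma condEnt_eq {α γ : Type*} [Fintype α] [Fintype γ] (hμ : IsPmf μ)
    (X : Ω → α) (Z : Ω → γ) :
    condEnt μ X Z = ent μ (fun ω => (X ω, Z ω)) - ent μ Z := by
  have hterm : ∀ z : γ,
      prb μ (fun ω => Z ω = z) * ent (condPmf μ (fun ω => Z ω = z)) X
      = - ∑ a : α, phi (prb μ (fun ω => X ω = a ∧ Z ω = z))
        + phi (prb μ (fun ω => Z ω = z)) := by
    intro z
    set pz := prb μ (fun ω => Z ω = z) with hpz
    rcases eq_or_ne pz 0 with h0 | h0
    · have hP : ∀ a : α, prb μ (fun ω => X ω = a ∧ Z ω = z) = 0 := by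
        intro a
        have hle : prb μ (fun ω => X ω = a ∧ Z ω = z) ≤ pz :=
          prb_mono hμ.1 fun ω h => h.2
        have hge : 0 ≤ prb μ (fun ω => X ω = a ∧ Z ω = z) := prb_nonneg hμ.1 _
        linarith [hle, hge, h0.le]
      simp [h0, hP, phi_zero]
    · rw [ent_eq_phi]
      have hcp : ∀ a : α, prb (condPmf μ (fun ω => Z ω = z)) (fun ω => X ω = a)
          = prb μ (fun ω => X ω = a ∧ Z ω = z) / pz := by
        intro a
        rw [prb_condPmf]
        congr 1
        exact prb_congr fun ω => and_comm
      have hsum : ∑ a : α, prb μ (fun ω => X ω = a ∧ Z ω = z) = pz :=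
        prb_fiber X (fun ω => Z ω = z)
      simp only [hcp]
      rw [mul_neg, Finset.mul_sum]
      have : ∀ a : α, pz * phi (prb μ (fun ω => X ω = a ∧ Z ω = z) / pz)
          = phi (prb μ (fun ω => X ω = a ∧ Z ω = z))
            - prb μ (fun ω => X ω = a ∧ Z ω = z) * Real.logb 2 pz := by
        intro a
        rw [phi_div h0]
        field_simp
      rw [Finset.sum_congr rfl fun a _ => this a, Finset.sum_sub_distrib,
        ← Finset.sum_mul, hsum]
      simp only [phi]
      ring
  have hext : condEnt μ X Z = ∑ z : γ,
      (- ∑ a : α, phi (prb μ (fun ω => X ω = a ∧ Z ω = z))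
        + phi (prb μ (fun ω => Z ω = z))) := by
    unfold condEnt
    rw [Finset.sum_congr rfl fun z _ => hterm z]
    refine Finset.sum_subset (Finset.subset_univ _) fun z _ hz => ?_
    have hpz : prb μ (fun ω => Z ω = z) = 0 := prb_eq_zero_of_not_mem_image Z hz
    have hP : ∀ a : α, prb μ (fun ω => X ω = a ∧ Z ω = z) = 0 := fun a =>
      prb_empty fun ω h => hz (Finset.mem_image.mpr ⟨ω, Finset.mem_univ ω, h.2⟩)
    simp [hpz, hP, phi_zero]
  rw [hext, Finset.sum_add_distrib, ent_pair_phi, ent_eq_phi Z,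
    ← Finset.sum_neg_distrib]
  ring

end EntLib
noncomputable section MILib

variable {Ω : Type*} [Fintype Ω] {μ : Ω → ℝ}

/-- Pure-algebra part of nonnegativity of mutual information. -/
lemma mi_key {α β : Type*} [Fintype α] [Fintype β] (P : α → β → ℝ) (r : α → ℝ) (s : β → ℝ)
    (hP0 : ∀ a b, 0 ≤ P a b) (hPr : ∀ a b, P a b ≤ r a) (hPs : ∀ a b, P a b ≤ s b)
    (hrsum : ∀ a, ∑ b, P a b = r a) (hssum : ∀ b, ∑ a, P a b = s b)
    (hr1 : ∑ a, r a = 1) (hs1 : ∑ b, s b = 1) :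
    0 ≤ (- ∑ a, phi (r a)) + (- ∑ b, phi (s b)) - (- ∑ b, ∑ a, phi (P a b)) := by
  have hlog2 : (0:ℝ) < Real.log 2 := Real.log_pos (by norm_num)
  have hkey : (- ∑ a, phi (r a)) + (- ∑ b, phi (s b)) - (- ∑ b, ∑ a, phi (P a b))
      = ∑ a, ∑ b, (phi (P a b) - P a b * Real.logb 2 (r a) - P a b * Real.logb 2 (s b)) := by
    have h1 : ∑ a, phi (r a) = ∑ a, ∑ b, P a b * Real.logb 2 (r a) := by
      refine Finset.sum_congr rfl fun a _ => ?_
      rw [← Finset.sum_mul, hrsum a]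
      rfl
    have h2 : ∑ b, phi (s b) = ∑ a, ∑ b, P a b * Real.logb 2 (s b) := by
      rw [Finset.sum_comm]
      refine Finset.sum_congr rfl fun b _ => ?_
      rw [← Finset.sum_mul, hssum b]
      rfl
    rw [h1, h2, Finset.sum_comm (f := fun b a => phi (P a b))]
    simp only [Finset.sum_sub_distrib]
    ring
  rw [hkey]
  have hPsum : ∑ a, ∑ b, P a b = 1 := by
    rw [Finset.sum_congr rfl fun a _ => hrsum a, hr1]
  have hrs : ∑ a, ∑ b, r a * s b = 1 := by
    simp only [← Finset.mul_sum, hs1, mul_one, hr1]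
  have hterm : ∀ a b, (P a b - r a * s b) / Real.log 2
      ≤ phi (P a b) - P a b * Real.logb 2 (r a) - P a b * Real.logb 2 (s b) := by
    intro a b
    have hsplit : phi (P a b) - P a b * Real.logb 2 (r a) - P a b * Real.logb 2 (s b)
        = (P a b * Real.log (P a b) - P a b * Real.log (r a) - P a b * Real.log (s b))
          / Real.log 2 := by
      simp only [phi, Real.logb]
      ring
    rw [hsplit, div_le_div_iff_of_pos_right hlog2]
    rcases eq_or_lt_of_le (hP0 a b) with h0 | hpos
    · rw [← h0]
      have : 0 ≤ r a * s b := by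
        have h1 : (0:ℝ) ≤ r a := le_trans (hP0 a b) (hPr a b)
        have h2 : (0:ℝ) ≤ s b := le_trans (hP0 a b) (hPs a b)
        positivity
      simp only [zero_mul, sub_zero, zero_sub]
      linarith
    · have hrpos : 0 < r a := lt_of_lt_of_le hpos (hPr a b)
      have hspos : 0 < s b := lt_of_lt_of_le hpos (hPs a b)
      have hlb : Real.log (r a * s b / P a b) ≤ r a * s b / P a b - 1 :=
        Real.log_le_sub_one_of_pos (by positivity)
      have hexp : Real.log (r a * s b / P a b)
          = Real.log (r a) + Real.log (s b) - Real.log (P a b) := by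
        rw [Real.log_div (by positivity) hpos.ne', Real.log_mul hrpos.ne' hspos.ne']
      have hmul : P a b * (Real.log (r a) + Real.log (s b) - Real.log (P a b))
          ≤ r a * s b - P a b := by
        have h := mul_le_mul_of_nonneg_left hlb (hP0 a b)
        rw [hexp] at h
        calc P a b * (Real.log (r a) + Real.log (s b) - Real.log (P a b))
            ≤ P a b * (r a * s b / P a b - 1) := h
          _ = r a * s b - P a b := by field_simp
      nlinarith [hmul]
  calc (0:ℝ) = (∑ a, ∑ b, (P a b - r a * s b)) / Real.log 2 := by
        simp only [Finset.sum_sub_distrib, hPsum, hrs]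
        simp
    _ = ∑ a, ∑ b, (P a b - r a * s b) / Real.log 2 := by
        rw [Finset.sum_div]
        exact Finset.sum_congr rfl fun a _ => by rw [Finset.sum_div]
    _ ≤ _ := Finset.sum_le_sum fun a _ => Finset.sum_le_sum fun b _ => hterm a b

lemma mutInfo_nonneg {α β : Type*} [Fintype α] [Fintype β] (hμ : IsPmf μ)
    (X : Ω → α) (Y : Ω → β) : 0 ≤ mutInfo μ X Y := by
  have hrsum : ∀ a, ∑ b, prb μ (fun ω => X ω = a ∧ Y ω = b) = prb μ (fun ω => X ω = a) := by
    intro a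
    rw [← prb_fiber (μ := μ) Y (fun ω => X ω = a)]
    exact Finset.sum_congr rfl fun b _ => prb_congr fun ω => and_comm
  have h : (0:ℝ) ≤ (- ∑ a, phi (prb μ (fun ω => X ω = a)))
      + (- ∑ b, phi (prb μ (fun ω => Y ω = b)))
      - (- ∑ b, ∑ a, phi (prb μ (fun ω => X ω = a ∧ Y ω = b))) :=
    mi_key (fun a b => prb μ (fun ω => X ω = a ∧ Y ω = b))
      (fun a => prb μ (fun ω => X ω = a)) (fun b => prb μ (fun ω => Y ω = b))
      (fun a b => prb_nonneg hμ.1 _)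
      (fun a b => prb_mono hμ.1 fun ω h => h.1)
      (fun a b => prb_mono hμ.1 fun ω h => h.2)
      hrsum
      (fun b => prb_fiber X (fun ω => Y ω = b))
      (sum_prb_fiber_eq_one hμ X) (sum_prb_fiber_eq_one hμ Y)
  unfold mutInfo
  rw [ent_pair_phi, ent_eq_phi X, ent_eq_phi Y]
  linarith [h]

lemma condMutInfo_nonneg {α β γ : Type*} [Fintype α] [Fintype β] (hμ : IsPmf μ)
    (X : Ω → α) (Y : Ω → β) (Z : Ω → γ) : 0 ≤ condMutInfo μ X Y Z := by
  unfold condMutInfo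
  refine Finset.sum_nonneg fun z _ => ?_
  rcases eq_or_lt_of_le (prb_nonneg (μ := μ) hμ.1 (fun ω => Z ω = z)) with h0 | hpos
  · rw [← h0, zero_mul]
  · exact mul_nonneg hpos.le
      (mutInfo_nonneg (isPmf_condPmf hμ.1 _ hpos.ne') X Y)

lemma condMutInfo_eq {α β γ : Type*} [Fintype α] [Fintype β] [Fintype γ] (hμ : IsPmf μ)
    (X : Ω → α) (Y : Ω → β) (Z : Ω → γ) :
    condMutInfo μ X Y Z
      = ent μ (fun ω => (X ω, Z ω)) + ent μ (fun ω => (Y ω, Z ω))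
        - ent μ (fun ω => ((X ω, Y ω), Z ω)) - ent μ Z := by
  have hsplit : condMutInfo μ X Y Z
      = condEnt μ X Z + condEnt μ Y Z - condEnt μ (fun ω => (X ω, Y ω)) Z := by
    unfold condMutInfo condEnt mutInfo
    simp only [mul_sub, mul_add, Finset.sum_sub_distrib, Finset.sum_add_distrib]
  rw [hsplit, condEnt_eq hμ X Z, condEnt_eq hμ Y Z, condEnt_eq hμ _ Z]
  ring

/-- Strong subadditivity / submodularity of entropy. -/
lemma ssa {α β γ : Type*} [Fintype α] [Fintype β] [Fintype γ] (hμ : IsPmf μ)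
    (X : Ω → α) (Y : Ω → β) (Z : Ω → γ) :
    ent μ (fun ω => ((X ω, Y ω), Z ω)) + ent μ Z
      ≤ ent μ (fun ω => (X ω, Z ω)) + ent μ (fun ω => (Y ω, Z ω)) := by
  have h := condMutInfo_nonneg hμ X Y Z
  rw [condMutInfo_eq hμ X Y Z] at h
  linarith

/-- Sufficiency: if the conditional law of `Yv` given `W` factors through `φ ∘ W`,
then `H(W, Yv) − H(W) = H(φ∘W, Yv) − H(φ∘W)`. -/
lemma suff_lemma {γ β δ : Type*} [Fintype γ] [Fintype β] [Fintype δ]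
    (W : Ω → γ) (Yv : Ω → β) (φ : γ → δ) (q : δ → β → ℝ)
    (hq1 : ∀ d, ∑ y, q d y = 1)
    (hjoint : ∀ w y, prb μ (fun ω => W ω = w ∧ Yv ω = y)
        = prb μ (fun ω => W ω = w) * q (φ w) y) :
    ent μ (fun ω => (W ω, Yv ω)) - ent μ W
      = ent μ (fun ω => (φ (W ω), Yv ω)) - ent μ (fun ω => φ (W ω)) := by
  classical
  have hphi : ∀ (c : ℝ) (d : δ), ∑ y, phi (c * q d y) = phi c + c * ∑ y, phi (q d y) := by
    intro c d
    rw [Finset.sum_congr rfl fun y _ => phi_mul c (q d y), Finset.sum_add_distrib,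
      ← Finset.sum_mul, hq1 d, one_mul, ← Finset.mul_sum]
  have hL : ent μ (fun ω => (W ω, Yv ω)) - ent μ W
      = - ∑ w, prb μ (fun ω => W ω = w) * ∑ y, phi (q (φ w) y) := by
    rw [ent_pair_phi W Yv, ent_eq_phi W]
    rw [Finset.sum_comm (f := fun y w => phi (prb μ (fun ω => W ω = w ∧ Yv ω = y)))]
    have hinner : ∀ w, ∑ y, phi (prb μ (fun ω => W ω = w ∧ Yv ω = y))
        = phi (prb μ (fun ω => W ω = w))
          + prb μ (fun ω => W ω = w) * ∑ y, phi (q (φ w) y) := by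
      intro w
      rw [Finset.sum_congr rfl fun y _ => by rw [hjoint w y], hphi]
    rw [Finset.sum_congr rfl fun w _ => hinner w, Finset.sum_add_distrib]
    ring
  have hPd : ∀ d, prb μ (fun ω => φ (W ω) = d)
      = ∑ w, if φ w = d then prb μ (fun ω => W ω = w) else 0 := by
    intro d
    rw [← prb_fiber W (fun ω => φ (W ω) = d)]
    refine Finset.sum_congr rfl fun w _ => ?_
    by_cases hw : φ w = d
    · simp only [hw, if_true]
      refine prb_congr fun ω => ?_
      constructor
      · exact fun h => h.1
      · exact fun h => ⟨h, by rw [h, hw]⟩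
    · simp only [hw, if_false]
      exact prb_empty fun ω h => hw (by rw [← h.1] at hw ⊢; rw [h.2])
  have hPdy : ∀ d y, prb μ (fun ω => φ (W ω) = d ∧ Yv ω = y)
      = prb μ (fun ω => φ (W ω) = d) * q d y := by
    intro d y
    rw [← prb_fiber W (fun ω => φ (W ω) = d ∧ Yv ω = y), hPd d, Finset.sum_mul]
    refine Finset.sum_congr rfl fun w _ => ?_
    by_cases hw : φ w = d
    · simp only [hw, if_true]
      rw [show (prb μ fun ω => W ω = w ∧ φ (W ω) = d ∧ Yv ω = y)
          = prb μ (fun ω => W ω = w ∧ Yv ω = y) from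
        prb_congr fun ω => by
          constructor
          · exact fun h => ⟨h.1, h.2.2⟩
          · exact fun h => ⟨h.1, by rw [h.1, hw], h.2⟩]
      rw [hjoint w y, hw]
    · simp only [hw, if_false, zero_mul]
      exact prb_empty fun ω h => hw (by rw [← h.1] at hw ⊢; rw [h.2.1])
  have hR : ent μ (fun ω => (φ (W ω), Yv ω)) - ent μ (fun ω => φ (W ω))
      = - ∑ d, prb μ (fun ω => φ (W ω) = d) * ∑ y, phi (q d y) := by
    rw [ent_pair_phi (fun ω => φ (W ω)) Yv, ent_eq_phi (fun ω => φ (W ω))]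
    rw [Finset.sum_comm (f := fun y d => phi (prb μ (fun ω => φ (W ω) = d ∧ Yv ω = y)))]
    have hinner : ∀ d, ∑ y, phi (prb μ (fun ω => φ (W ω) = d ∧ Yv ω = y))
        = phi (prb μ (fun ω => φ (W ω) = d))
          + prb μ (fun ω => φ (W ω) = d) * ∑ y, phi (q d y) := by
      intro d
      rw [Finset.sum_congr rfl fun y _ => by rw [hPdy d y], hphi]
    rw [Finset.sum_congr rfl fun d _ => hinner d, Finset.sum_add_distrib]
    ring
  rw [hL, hR, neg_inj]
  have hstep : ∑ d, prb μ (fun ω => φ (W ω) = d) * ∑ y, phi (q d y)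
      = ∑ d, ∑ w, if φ w = d then prb μ (fun ω => W ω = w) * ∑ y, phi (q d y) else 0 := by
    refine Finset.sum_congr rfl fun d _ => ?_
    rw [hPd d, Finset.sum_mul]
    exact Finset.sum_congr rfl fun w _ => by by_cases hw : φ w = d <;> simp [hw]
  rw [hstep, Finset.sum_comm]
  refine Finset.sum_congr rfl fun w _ => ?_
  rw [Finset.sum_ite_eq Finset.univ (φ w)
    (fun d => prb μ (fun ω => W ω = w) * ∑ y, phi (q d y))]
  simp

end MILib
noncomputable section ModelLib

/-- Padded prefix of outcomes: records `y s` for `s < n`, `none` otherwise. -/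
def Prev {T : ℕ} {Y : Type*} (n : ℕ) (y : Fin T → Y) : Fin T → Option Y :=
  fun s => if (s : ℕ) < n then some (y s) else none

lemma numDef_congr {N T : ℕ} {Y : Type*}
    (x : (t : Fin T) → (Fin t.val → Y) → Fin N → Bool) (S : Finset (Fin N))
    {z y : Fin T → Y} {t : Fin T} (h : ∀ s : Fin T, (s : ℕ) < (t : ℕ) → z s = y s) :
    numDef x S z t = numDef x S y t := by
  unfold numDef
  have : prevOut z t = prevOut y t := by
    funext s
    exact h _ s.isLt
  rw [this]

lemma adapt_sum {N T : ℕ} {Y : Type*} [Fintype Y] (ν : ℕ → Y → ℝ)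
    (hν1 : ∀ k, ∑ y, ν k y = 1)
    (x : (t : Fin T) → (Fin t.val → Y) → Fin N → Bool) (S : Finset (Fin N)) :
    ∀ (d n : ℕ), n + d = T → ∀ (y : Fin T → Y),
      ∑ z : Fin T → Y, ind (∀ s : Fin T, (s : ℕ) < n → z s = y s)
          (∏ t, ν (numDef x S z t) (z t))
        = ∏ t ∈ Finset.univ.filter (fun t : Fin T => (t : ℕ) < n),
            ν (numDef x S y t) (y t) := by
  intro d
  induction d with
  | zero =>
    intro n hn y
    have hiff : ∀ z : Fin T → Y, (∀ s : Fin T, (s : ℕ) < n → z s = y s) ↔ z = y := by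
      intro z
      constructor
      · intro h
        funext s
        exact h s (by have := s.isLt; omega)
      · intro h s _
        rw [h]
    rw [Finset.sum_congr rfl fun z _ => ind_congr (hiff z) _]
    rw [sum_ind_eq y (fun z => ∏ t, ν (numDef x S z t) (z t))]
    have hf : Finset.univ.filter (fun t : Fin T => (t : ℕ) < n) = Finset.univ := by
      refine Finset.filter_true_of_mem fun t _ => ?_
      have := t.isLt
      omega
    rw [hf]
  | succ d ih =>
    intro n hn y
    have hnT : n < T := by omega
    set tn : Fin T := ⟨n, hnT⟩ with htn
    have hiff : ∀ (z : Fin T → Y) (c : Y),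
        (∀ s : Fin T, (s : ℕ) < n + 1 → z s = Function.update y tn c s) ↔
        ((∀ s : Fin T, (s : ℕ) < n → z s = y s) ∧ z tn = c) := by
      intro z c
      constructor
      · intro h
        constructor
        · intro s hs
          have hne : s ≠ tn := by
            intro he
            rw [he] at hs
            simp [htn] at hs
          rw [h s (by omega), Function.update_of_ne hne]
        · rw [h tn (by simp [htn]), Function.update_self]
      · rintro ⟨h1, h2⟩ s hs
        by_cases hsn : (s : ℕ) < n
        · have hne : s ≠ tn := by
            intro he
            rw [he] at hsn
            simp [htn] at hsn
          rw [h1 s hsn, Function.update_of_ne hne]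
        · have : s = tn := by
            apply Fin.ext
            simp [htn]
            omega
          rw [this, Function.update_self, h2]
    have hswap : ∀ z : Fin T → Y,
        ind (∀ s : Fin T, (s : ℕ) < n → z s = y s) (∏ t, ν (numDef x S z t) (z t))
        = ∑ c : Y, ind (∀ s : Fin T, (s : ℕ) < n + 1 → z s = Function.update y tn c s)
            (∏ t, ν (numDef x S z t) (z t)) := by
      intro z
      rw [Finset.sum_congr rfl fun c _ => ind_congr (hiff z c) _]
      by_cases hA : ∀ s : Fin T, (s : ℕ) < n → z s = y s
      · rw [ind_pos hA]
        rw [Finset.sum_congr rfl fun c _ => ind_congr (and_iff_right hA) _]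
        rw [Finset.sum_congr rfl fun c _ => ind_congr (eq_comm (a := z tn) (b := c)) _]
        exact (sum_ind_eq (z tn) (fun _ => ∏ t, ν (numDef x S z t) (z t))).symm
      · rw [ind_neg hA]
        symm
        refine Finset.sum_eq_zero fun c _ => ind_neg (fun hh => hA hh.1) _
    rw [Finset.sum_congr rfl fun z _ => hswap z, Finset.sum_comm]
    have hstep : ∀ c : Y,
        ∑ z : Fin T → Y, ind (∀ s : Fin T, (s : ℕ) < n + 1 → z s = Function.update y tn c s)
            (∏ t, ν (numDef x S z t) (z t))
        = ν (numDef x S y tn) c *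
            ∏ t ∈ Finset.univ.filter (fun t : Fin T => (t : ℕ) < n),
              ν (numDef x S y t) (y t) := by
      intro c
      rw [ih (n + 1) (by omega) (Function.update y tn c)]
      have hfilter : Finset.univ.filter (fun t : Fin T => (t : ℕ) < n + 1)
          = insert tn (Finset.univ.filter (fun t : Fin T => (t : ℕ) < n)) := by
        ext t
        simp only [Finset.mem_filter, Finset.mem_insert, Finset.mem_univ, true_and]
        constructor
        · intro h
          by_cases ht : (t : ℕ) < n
          · exact Or.inr ht
          · exact Or.inl (Fin.ext (by simp [htn]; omega))
        · rintro (rfl | h)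
          · simp [htn]
          · omega
      rw [hfilter, Finset.prod_insert (by simp [htn])]
      congr 1
      · have h1 : Function.update y tn c tn = c := Function.update_self tn c y
        have h2 : numDef x S (Function.update y tn c) tn = numDef x S y tn := by
          refine numDef_congr x S fun s hs => ?_
          refine Function.update_of_ne ?_ c y
          intro he
          rw [he] at hs
          simp [htn] at hs
        rw [h1, h2]
      · refine Finset.prod_congr rfl fun t ht => ?_
        have htn' : (t : ℕ) < n := (Finset.mem_filter.mp ht).2
        have hne : t ≠ tn := by
          intro he
          rw [he] at htn'
          simp [htn] at htn'
        have h1 : Function.update y tn c t = y t := Function.update_of_ne hne c y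
        have h2 : numDef x S (Function.update y tn c) t = numDef x S y t := by
          refine numDef_congr x S fun s hs => ?_
          refine Function.update_of_ne ?_ c y
          intro he
          rw [he] at hs
          simp [htn] at hs
          omega
        rw [h1, h2]
    rw [Finset.sum_congr rfl fun c _ => hstep c, ← Finset.sum_mul, hν1, one_mul]

end ModelLib
noncomputable section GenieLib

variable {N K l T : ℕ} {Y : Type*} [Fintype Y] {ν : ℕ → Y → ℝ}
  {x : (t : Fin T) → (Fin t.val → Y) → Fin N → Bool}

/-- The genie weight of a pair `(𝓛, 𝒦)`. -/
def w0 (N K l : ℕ) (L0 : KSets N l) (K0 : KSets N K) : ℝ :=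
  if L0.val ⊆ K0.val then (1 / (N.choose l : ℝ)) * (1 / ((N - l).choose (K - l) : ℝ)) else 0

lemma geniePmf_eq (ω : KSets N l × KSets N K × (Fin T → Y)) :
    geniePmf N K l T Y ν x ω
      = w0 N K l ω.1 ω.2.1 * ∏ t : Fin T, ν (numDef x ω.2.1.val ω.2.2 t) (ω.2.2 t) := rfl

lemma w0_nonneg (L0 : KSets N l) (K0 : KSets N K) : 0 ≤ w0 N K l L0 K0 := by
  unfold w0
  split
  · positivity
  · exact le_rfl

lemma sum_slice {A B C : Type*} [Fintype A] [Fintype B] [Fintype C]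
    (f : A × B × C → ℝ) (a0 : A) (b0 : B) (R : C → Prop) :
    (∑ ω : A × B × C, ind (ω.1 = a0 ∧ ω.2.1 = b0 ∧ R ω.2.2) (f ω))
      = ∑ c : C, ind (R c) (f (a0, b0, c)) := by
  classical
  have hinj : ∀ c ∈ (Finset.univ : Finset C), ∀ c' ∈ (Finset.univ : Finset C),
      (a0, b0, c) = ((a0, b0, c') : A × B × C) → c = c' := by
    intro c _ c' _ h
    exact (Prod.ext_iff.mp (Prod.ext_iff.mp h).2).2
  have h1 := Finset.sum_image (f := fun ω : A × B × C =>
      ind (ω.1 = a0 ∧ ω.2.1 = b0 ∧ R ω.2.2) (f ω))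
      (g := fun c : C => ((a0, b0, c) : A × B × C)) hinj
  have h2 : (∑ ω : A × B × C, ind (ω.1 = a0 ∧ ω.2.1 = b0 ∧ R ω.2.2) (f ω))
      = ∑ ω ∈ Finset.univ.image (fun c : C => ((a0, b0, c) : A × B × C)),
          ind (ω.1 = a0 ∧ ω.2.1 = b0 ∧ R ω.2.2) (f ω) := by
    symm
    refine Finset.sum_subset (Finset.subset_univ _) fun ω _ hω => ?_
    refine ind_neg ?_ _
    rintro ⟨e1, e2, hR⟩
    exact hω (Finset.mem_image.mpr ⟨ω.2.2, Finset.mem_univ _, by rw [← e1, ← e2]⟩)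
  rw [h2, h1]
  refine Finset.sum_congr rfl fun c _ => ind_congr ?_ _
  simp

lemma genie_prefix (hν1 : ∀ k, ∑ y, ν k y = 1)
    (L0 : KSets N l) (K0 : KSets N K) (n : ℕ) (hn : n ≤ T) (y0 : Fin T → Y) :
    prb (geniePmf N K l T Y ν x)
        (fun ω => ω.1 = L0 ∧ ω.2.1 = K0 ∧ (∀ s : Fin T, (s : ℕ) < n → ω.2.2 s = y0 s))
      = w0 N K l L0 K0 *
          ∏ t ∈ Finset.univ.filter (fun t : Fin T => (t : ℕ) < n),
            ν (numDef x K0.val y0 t) (y0 t) := by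
  classical
  rw [prb_eq_ind]
  rw [sum_slice (geniePmf N K l T Y ν x) L0 K0
    (fun z => ∀ s : Fin T, (s : ℕ) < n → z s = y0 s)]
  have hz : ∀ z : Fin T → Y,
      ind (∀ s : Fin T, (s : ℕ) < n → z s = y0 s) (geniePmf N K l T Y ν x (L0, K0, z))
      = w0 N K l L0 K0 *
          ind (∀ s : Fin T, (s : ℕ) < n → z s = y0 s)
            (∏ t : Fin T, ν (numDef x K0.val z t) (z t)) := by
    intro z
    rw [geniePmf_eq (ω := (L0, K0, z)), ind_mul_left]
  rw [Finset.sum_congr rfl fun z _ => hz z, ← Finset.mul_sum]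
  congr 1
  exact adapt_sum ν hν1 x K0.val (T - n) n (by omega) y0

lemma count_supersets (hlK : l ≤ K) (L0 : KSets N l) :
    (Finset.univ.filter (fun K0 : KSets N K => L0.val ⊆ K0.val)).card
      = (N - l).choose (K - l) := by
  classical
  have hcard : ((Finset.univ \ L0.val).powersetCard (K - l)).card = (N - l).choose (K - l) := by
    rw [Finset.card_powersetCard, Finset.card_sdiff_of_subset (Finset.subset_univ _),
      Finset.card_univ, Fintype.card_fin, L0.2]
  rw [← hcard]
  refine Finset.card_bij' (fun K0 _ => K0.val \ L0.val)
    (fun S hS => ⟨S ∪ L0.val, ?_⟩) ?_ ?_ ?_ ?_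
  · rcases Finset.mem_powersetCard.mp hS with ⟨hsub, hc⟩
    have hdisj : Disjoint S L0.val := by
      rw [Finset.disjoint_left]
      intro i hi
      exact (Finset.mem_sdiff.mp (hsub hi)).2
    rw [Finset.card_union_of_disjoint hdisj, hc, L0.2]
    omega
  · intro K0 hK0
    have hsub := (Finset.mem_filter.mp hK0).2
    rw [Finset.mem_powersetCard]
    constructor
    · intro i hi
      rw [Finset.mem_sdiff] at hi ⊢
      exact ⟨Finset.mem_univ i, hi.2⟩
    · rw [Finset.card_sdiff_of_subset hsub, K0.2, L0.2]
  · intro S hS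
    rw [Finset.mem_filter]
    exact ⟨Finset.mem_univ _, Finset.subset_union_right⟩
  · intro K0 hK0
    have hsub := (Finset.mem_filter.mp hK0).2
    exact Subtype.ext (Finset.sdiff_union_of_subset hsub)
  · intro S hS
    rcases Finset.mem_powersetCard.mp hS with ⟨hsub, hc⟩
    have hdisj : Disjoint S L0.val := by
      rw [Finset.disjoint_left]
      intro i hi
      exact (Finset.mem_sdiff.mp (hsub hi)).2
    ext i
    simp only [Finset.mem_sdiff, Finset.mem_union]
    constructor
    · rintro ⟨h1 | h1, h2⟩
      · exact h1
      · exact absurd h1 h2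
    · intro hi
      exact ⟨Or.inl hi, Finset.disjoint_left.mp hdisj hi⟩

lemma genie_isPmf (hν : ∀ k, IsPmf (ν k)) (hlK : l < K) (hKN : K ≤ N)
    (y00 : Fin T → Y) : IsPmf (geniePmf N K l T Y ν x) := by
  classical
  constructor
  · intro ω
    rw [geniePmf_eq]
    exact mul_nonneg (w0_nonneg _ _) (Finset.prod_nonneg fun t _ => (hν _).1 _)
  · have hν1 : ∀ k, ∑ y, ν k y = 1 := fun k => (hν k).2
    have hC1 : ((N.choose l : ℕ) : ℝ) ≠ 0 := by
      exact_mod_cast (Nat.choose_pos (le_trans hlK.le hKN)).ne'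
    have hC2 : (((N - l).choose (K - l) : ℕ) : ℝ) ≠ 0 := by
      exact_mod_cast (Nat.choose_pos (Nat.sub_le_sub_right hKN l)).ne'
    have hpair : ∀ (L0 : KSets N l) (K0 : KSets N K),
        prb (geniePmf N K l T Y ν x) (fun ω => (ω.1, ω.2.1) = (L0, K0))
          = w0 N K l L0 K0 := by
      intro L0 K0
      have h := genie_prefix (x := x) hν1 L0 K0 0 (Nat.zero_le T) y00
      have hfilter : Finset.univ.filter (fun t : Fin T => (t : ℕ) < 0) = ∅ :=
        Finset.filter_false_of_mem fun t _ => by omega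
      rw [hfilter, Finset.prod_empty, mul_one] at h
      rw [← h]
      refine prb_congr fun ω => ?_
      simp only [Prod.ext_iff]
      constructor
      · rintro ⟨h1, h2⟩
        exact ⟨h1, h2, fun s hs => absurd hs (by omega)⟩
      · rintro ⟨h1, h2, _⟩
        exact ⟨h1, h2⟩
    have hfib := prb_fiber (μ := geniePmf N K l T Y ν x)
      (fun ω => (ω.1, ω.2.1)) (fun _ => True)
    rw [prb_true] at hfib
    rw [← hfib]
    have hthis : ∀ p : KSets N l × KSets N K,
        prb (geniePmf N K l T Y ν x) (fun ω => (ω.1, ω.2.1) = p ∧ True)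
          = w0 N K l p.1 p.2 := by
      intro p
      rw [show (fun ω : KSets N l × KSets N K × (Fin T → Y) => (ω.1, ω.2.1) = p ∧ True)
          = (fun ω => (ω.1, ω.2.1) = p) from funext fun ω => by simp]
      rw [← hpair p.1 p.2]
    rw [Finset.sum_congr rfl fun p _ => hthis p, Fintype.sum_prod_type]
    have hinner : ∀ L0 : KSets N l,
        ∑ K0 : KSets N K, w0 N K l L0 K0
          = ((N - l).choose (K - l) : ℝ) * ((1 / (N.choose l : ℝ)) *
              (1 / ((N - l).choose (K - l) : ℝ))) := by
      intro L0
      unfold w0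
      rw [← Finset.sum_filter, Finset.sum_const, count_supersets hlK.le L0, nsmul_eq_mul]
    rw [Finset.sum_congr rfl fun L0 _ => hinner L0, Finset.sum_const, Finset.card_univ,
      Fintype.card_finset_len, Fintype.card_fin, nsmul_eq_mul]
    field_simp

end GenieLib
noncomputable section PrevLib

variable {T : ℕ} {Y : Type*}

lemma Prev_eq_iff (n : ℕ) (y y' : Fin T → Y) :
    Prev n y = Prev n y' ↔ ∀ s : Fin T, (s : ℕ) < n → y s = y' s := by
  constructor
  · intro h s hs
    have := congrFun h s
    unfold Prev at this
    rw [if_pos hs, if_pos hs] at this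
    exact Option.some_injective _ this
  · intro h
    funext s
    unfold Prev
    by_cases hs : (s : ℕ) < n
    · rw [if_pos hs, if_pos hs, h s hs]
    · rw [if_neg hs, if_neg hs]

lemma Prev_succ_iff (t : Fin T) (y y' : Fin T → Y) :
    Prev ((t : ℕ) + 1) y = Prev ((t : ℕ) + 1) y'
      ↔ (Prev (t : ℕ) y = Prev (t : ℕ) y' ∧ y t = y' t) := by
  rw [Prev_eq_iff, Prev_eq_iff]
  constructor
  · intro h
    exact ⟨fun s hs => h s (by omega), h t (by omega)⟩
  · rintro ⟨h1, h2⟩ s hs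
    by_cases hst : (s : ℕ) < (t : ℕ)
    · exact h1 s hst
    · have : s = t := Fin.ext (by omega)
      rw [this]
      exact h2

lemma Prev_zero (y : Fin T → Y) : Prev 0 y = fun _ => none := by
  funext s
  unfold Prev
  rw [if_neg (by omega)]

lemma Prev_top_iff (y y' : Fin T → Y) : Prev T y = Prev T y' ↔ y = y' := by
  rw [Prev_eq_iff]
  constructor
  · intro h
    funext s
    exact h s s.isLt
  · intro h s _
    rw [h]

/-- Extract the outcomes before test `t` from the padded prefix. -/
def extOut [Inhabited Y] (t : Fin T) (p : Fin T → Option Y) : Fin (t : ℕ) → Y :=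
  fun s => (p ⟨s.val, s.isLt.trans t.isLt⟩).iget

lemma extOut_Prev [Inhabited Y] (t : Fin T) (y : Fin T → Y) :
    extOut t (Prev (t : ℕ) y) = prevOut y t := by
  funext s
  unfold extOut Prev prevOut
  rw [if_pos s.isLt]

end PrevLib

noncomputable section Model3

/-- Number of recorded `true`s. -/
def mOne {N : ℕ} (f : Fin N → Option Bool) : ℕ :=
  (Finset.univ.filter (fun i => f i = some true)).card

lemma mOne_XS {N : ℕ} (S : Finset (Fin N)) (v : Fin N → Bool) :
    mOne (XS S v).2 = (S.filter (fun i => v i = true)).card := by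
  unfold mOne XS
  congr 1
  ext i
  simp only [Finset.mem_filter, Finset.mem_univ, true_and]
  by_cases hi : i ∈ S
  · simp [hi]
  · simp [hi]

lemma numDef_split {N T : ℕ} {Y : Type*}
    (x : (t : Fin T) → (Fin t.val → Y) → Fin N → Bool)
    {L0 K0 : Finset (Fin N)} (hsub : L0 ⊆ K0) (y : Fin T → Y) (t : Fin T) :
    numDef x K0 y t
      = ((K0 \ L0).filter (fun i => x t (prevOut y t) i = true)).card
        + (L0.filter (fun i => x t (prevOut y t) i = true)).card := by
  unfold numDef
  rw [← Finset.card_union_of_disjoint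
    (Finset.disjoint_filter_filter Finset.sdiff_disjoint), ← Finset.filter_union,
    Finset.sdiff_union_of_subset hsub]

lemma prod_filter_succ {T : ℕ} (t : Fin T) (f : Fin T → ℝ) :
    ∏ s ∈ Finset.univ.filter (fun s : Fin T => (s : ℕ) < (t : ℕ) + 1), f s
      = f t * ∏ s ∈ Finset.univ.filter (fun s : Fin T => (s : ℕ) < (t : ℕ)), f s := by
  have hfilter : Finset.univ.filter (fun s : Fin T => (s : ℕ) < (t : ℕ) + 1)
      = insert t (Finset.univ.filter (fun s : Fin T => (s : ℕ) < (t : ℕ))) := by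
    ext s
    simp only [Finset.mem_filter, Finset.mem_insert, Finset.mem_univ, true_and]
    constructor
    · intro h
      by_cases hst : (s : ℕ) < (t : ℕ)
      · exact Or.inr hst
      · exact Or.inl (Fin.ext (by omega))
    · rintro (rfl | h)
      · omega
      · omega
  rw [hfilter, Finset.prod_insert (by simp)]

end Model3
noncomputable section JointLib

variable {N K l T : ℕ} {Y : Type*} [Fintype Y] {ν : ℕ → Y → ℝ}
  {x : (t : Fin T) → (Fin t.val → Y) → Fin N → Bool}

lemma agree_update_iff {T : ℕ} {Y : Type*} (t : Fin T) (y : Fin T → Y) (c : Y)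
    (z : Fin T → Y) :
    (∀ s : Fin T, (s : ℕ) < (t : ℕ) + 1 → z s = Function.update y t c s)
      ↔ ((∀ s : Fin T, (s : ℕ) < (t : ℕ) → z s = y s) ∧ z t = c) := by
  constructor
  · intro h
    constructor
    · intro s hs
      have hne : s ≠ t := by
        intro he
        rw [he] at hs
        omega
      rw [h s (by omega), Function.update_of_ne hne]
    · rw [h t (by omega), Function.update_self]
  · rintro ⟨h1, h2⟩ s hs
    by_cases hsn : (s : ℕ) < (t : ℕ)
    · have hne : s ≠ t := by
        intro he
        rw [he] at hsn
        omega
      rw [h1 s hsn, Function.update_of_ne hne]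
    · have : s = t := Fin.ext (by omega)
      rw [this, Function.update_self, h2]

lemma genie_joint [Inhabited Y] (hν : ∀ k, IsPmf (ν k)) (t : Fin T)
    (w : KSets N K × (KSets N l × (Fin T → Option Y))) (c : Y) :
    prb (geniePmf N K l T Y ν x)
        (fun ω => (ω.2.1, (ω.1, Prev (t : ℕ) ω.2.2)) = w ∧ ω.2.2 t = c)
      = prb (geniePmf N K l T Y ν x)
          (fun ω => (ω.2.1, (ω.1, Prev (t : ℕ) ω.2.2)) = w)
        * ν (mOne (XS (w.1.val \ w.2.1.val) (x t (extOut t w.2.2))).2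
            + mOne (XS w.2.1.val (x t (extOut t w.2.2))).2) c := by
  classical
  obtain ⟨K0, L0, p0⟩ := w
  have hν1 : ∀ k, ∑ y, ν k y = 1 := fun k => (hν k).2
  by_cases hex : ∃ y0 : Fin T → Y, Prev (t : ℕ) y0 = p0
  · obtain ⟨y0, hy0⟩ := hex
    have hW : ∀ ω : KSets N l × KSets N K × (Fin T → Y),
        ((ω.2.1, (ω.1, Prev (t : ℕ) ω.2.2)) = (K0, (L0, p0)))
          ↔ (ω.1 = L0 ∧ ω.2.1 = K0 ∧ ∀ s : Fin T, (s : ℕ) < (t : ℕ) → ω.2.2 s = y0 s) := by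
      intro ω
      rw [← hy0]
      simp only [Prod.ext_iff]
      rw [Prev_eq_iff]
      tauto
    have h1 : prb (geniePmf N K l T Y ν x)
        (fun ω => (ω.2.1, (ω.1, Prev (t : ℕ) ω.2.2)) = (K0, (L0, p0)))
        = w0 N K l L0 K0 *
            ∏ s ∈ Finset.univ.filter (fun s : Fin T => (s : ℕ) < (t : ℕ)),
              ν (numDef x K0.val y0 s) (y0 s) := by
      rw [prb_congr hW]
      exact genie_prefix hν1 L0 K0 (t : ℕ) (le_of_lt t.isLt) y0
    set y0' : Fin T → Y := Function.update y0 t c with hy0'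
    have hW2 : ∀ ω : KSets N l × KSets N K × (Fin T → Y),
        ((ω.2.1, (ω.1, Prev (t : ℕ) ω.2.2)) = (K0, (L0, p0)) ∧ ω.2.2 t = c)
          ↔ (ω.1 = L0 ∧ ω.2.1 = K0 ∧
              ∀ s : Fin T, (s : ℕ) < (t : ℕ) + 1 → ω.2.2 s = y0' s) := by
      intro ω
      rw [hW ω, hy0']
      rw [agree_update_iff t y0 c ω.2.2]
      tauto
    have h2 : prb (geniePmf N K l T Y ν x)
        (fun ω => (ω.2.1, (ω.1, Prev (t : ℕ) ω.2.2)) = (K0, (L0, p0)) ∧ ω.2.2 t = c)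
        = w0 N K l L0 K0 *
            ∏ s ∈ Finset.univ.filter (fun s : Fin T => (s : ℕ) < (t : ℕ) + 1),
              ν (numDef x K0.val y0' s) (y0' s) := by
      rw [prb_congr hW2]
      exact genie_prefix hν1 L0 K0 ((t : ℕ) + 1) t.isLt y0'
    have hprod : ∏ s ∈ Finset.univ.filter (fun s : Fin T => (s : ℕ) < (t : ℕ) + 1),
          ν (numDef x K0.val y0' s) (y0' s)
        = ν (numDef x K0.val y0 t) c *
            ∏ s ∈ Finset.univ.filter (fun s : Fin T => (s : ℕ) < (t : ℕ)),
              ν (numDef x K0.val y0 s) (y0 s) := by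
      rw [prod_filter_succ t (fun s => ν (numDef x K0.val y0' s) (y0' s))]
      congr 1
      · have ha : y0' t = c := Function.update_self t c y0
        have hb : numDef x K0.val y0' t = numDef x K0.val y0 t := by
          refine numDef_congr x K0.val fun s hs => ?_
          refine Function.update_of_ne ?_ c y0
          intro he
          rw [he] at hs
          omega
        rw [ha, hb]
      · refine Finset.prod_congr rfl fun s hs => ?_
        have hsn : (s : ℕ) < (t : ℕ) := (Finset.mem_filter.mp hs).2
        have hne : s ≠ t := by
          intro he
          rw [he] at hsn
          omega
        have ha : y0' s = y0 s := Function.update_of_ne hne c y0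
        have hb : numDef x K0.val y0' s = numDef x K0.val y0 s := by
          refine numDef_congr x K0.val fun u hu => ?_
          refine Function.update_of_ne ?_ c y0
          intro he
          rw [he] at hu
          omega
        rw [ha, hb]
    rw [h1, h2, hprod]
    by_cases hsub : L0.val ⊆ K0.val
    · have hnum : numDef x K0.val y0 t
          = mOne (XS (K0.val \ L0.val) (x t (extOut t p0))).2
            + mOne (XS L0.val (x t (extOut t p0))).2 := by
        rw [← hy0, extOut_Prev, mOne_XS, mOne_XS]
        exact numDef_split x hsub y0 t
      rw [← hnum]
      ring
    · have hw0 : w0 N K l L0 K0 = 0 := by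
        unfold w0
        rw [if_neg hsub]
      rw [hw0]
      ring
  · have hempty : ∀ ω : KSets N l × KSets N K × (Fin T → Y),
        ¬ ((ω.2.1, (ω.1, Prev (t : ℕ) ω.2.2)) = (K0, (L0, p0))) := by
      intro ω h
      exact hex ⟨ω.2.2, (Prod.ext_iff.mp (Prod.ext_iff.mp h).2).2⟩
    rw [prb_empty (fun ω h => hempty ω h.1), prb_empty hempty, zero_mul]

end JointLib
noncomputable section FinalLib

variable {N K l T : ℕ} {Y : Type*} [Fintype Y] {ν : ℕ → Y → ℝ}
  {x : (t : Fin T) → (Fin t.val → Y) → Fin N → Bool}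

lemma step1 (hμ : IsPmf (geniePmf N K l T Y ν x)) (Khat : (Fin T → Y) → KSets N K) :
    condMutInfo (geniePmf N K l T Y ν x)
        (fun ω => ω.2.1) (fun ω => Khat ω.2.2) (fun ω => ω.1)
      ≤ condMutInfo (geniePmf N K l T Y ν x)
        (fun ω => ω.2.1) (fun ω => ω.2.2) (fun ω => ω.1) := by
  set μ := geniePmf N K l T Y ν x with hμdef
  rw [condMutInfo_eq hμ, condMutInfo_eq hμ]
  have hssa : ent μ (fun ω => ((ω.2.1, ω.2.2), (Khat ω.2.2, ω.1)))
        + ent μ (fun ω => (Khat ω.2.2, ω.1))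
      ≤ ent μ (fun ω => (ω.2.1, (Khat ω.2.2, ω.1)))
        + ent μ (fun ω => (ω.2.2, (Khat ω.2.2, ω.1))) :=
    ssa hμ (fun ω => ω.2.1) (fun ω => ω.2.2) (fun ω => (Khat ω.2.2, ω.1))
  have hc1 : ent μ (fun ω => ((ω.2.1, ω.2.2), (Khat ω.2.2, ω.1)))
      = ent μ (fun ω => ((ω.2.1, ω.2.2), ω.1)) := by
    refine ent_congr fun ω ω' => ?_
    simp only [Prod.ext_iff]
    constructor
    · rintro ⟨⟨h1, h2⟩, h3, h4⟩
      exact ⟨⟨h1, h2⟩, h4⟩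
    · rintro ⟨⟨h1, h2⟩, h4⟩
      exact ⟨⟨h1, h2⟩, by rw [h2], h4⟩
  have hc2 : ent μ (fun ω => (ω.2.1, (Khat ω.2.2, ω.1)))
      = ent μ (fun ω => ((ω.2.1, Khat ω.2.2), ω.1)) := by
    refine ent_congr fun ω ω' => ?_
    simp only [Prod.ext_iff]
    tauto
  have hc3 : ent μ (fun ω => (ω.2.2, (Khat ω.2.2, ω.1)))
      = ent μ (fun ω => (ω.2.2, ω.1)) := by
    refine ent_congr fun ω ω' => ?_
    simp only [Prod.ext_iff]
    constructor
    · rintro ⟨h1, h2, h3⟩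
      exact ⟨h1, h3⟩
    · rintro ⟨h1, h3⟩
      exact ⟨h1, by rw [h1], h3⟩
  linarith [hssa, hc1, hc2, hc3]

lemma step2 (hμ : IsPmf (geniePmf N K l T Y ν x)) :
    condMutInfo (geniePmf N K l T Y ν x)
        (fun ω => ω.2.1) (fun ω => ω.2.2) (fun ω => ω.1)
      = ∑ t : Fin T, condMutInfo (geniePmf N K l T Y ν x)
          (fun ω => ω.2.1) (fun ω => ω.2.2 t)
          (fun ω => (ω.1, Prev (t : ℕ) ω.2.2)) := by
  set μ := geniePmf N K l T Y ν x with hμdef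
  set F : ℕ → ℝ := fun n => ent μ (fun ω => (ω.2.1, (ω.1, Prev n ω.2.2))) with hF
  set G : ℕ → ℝ := fun n => ent μ (fun ω => (ω.1, Prev n ω.2.2)) with hG
  have hterm : ∀ t : Fin T,
      condMutInfo μ (fun ω => ω.2.1) (fun ω => ω.2.2 t)
          (fun ω => (ω.1, Prev (t : ℕ) ω.2.2))
        = F (t : ℕ) + G ((t : ℕ) + 1) - F ((t : ℕ) + 1) - G (t : ℕ) := by
    intro t
    rw [condMutInfo_eq hμ]
    have h2 : ent μ (fun ω => (ω.2.2 t, (ω.1, Prev (t : ℕ) ω.2.2)))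
        = ent μ (fun ω => (ω.1, Prev ((t : ℕ) + 1) ω.2.2)) := by
      refine ent_congr fun ω ω' => ?_
      simp only [Prod.ext_iff, Prev_succ_iff]
      tauto
    have h3 : ent μ (fun ω => ((ω.2.1, ω.2.2 t), (ω.1, Prev (t : ℕ) ω.2.2)))
        = ent μ (fun ω => (ω.2.1, (ω.1, Prev ((t : ℕ) + 1) ω.2.2))) := by
      refine ent_congr fun ω ω' => ?_
      simp only [Prod.ext_iff, Prev_succ_iff]
      tauto
    have e1 : ent μ (fun ω => (ω.2.1, (ω.1, Prev (t : ℕ) ω.2.2))) = F (t : ℕ) := rfl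
    have e4 : ent μ (fun ω => (ω.1, Prev (t : ℕ) ω.2.2)) = G (t : ℕ) := rfl
    have e2 : ent μ (fun ω => (ω.1, Prev ((t : ℕ) + 1) ω.2.2)) = G ((t : ℕ) + 1) := rfl
    have e3 : ent μ (fun ω => (ω.2.1, (ω.1, Prev ((t : ℕ) + 1) ω.2.2)))
        = F ((t : ℕ) + 1) := rfl
    linarith [h2, h3, e1, e2, e3, e4]
  rw [Finset.sum_congr rfl fun t _ => hterm t]
  have htel : ∑ t : Fin T, (F (t : ℕ) + G ((t : ℕ) + 1) - F ((t : ℕ) + 1) - G (t : ℕ))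
      = F 0 + G T - F T - G 0 := by
    rw [Fin.sum_univ_eq_sum_range (fun n => F n + G (n + 1) - F (n + 1) - G n) T]
    rw [Finset.sum_congr rfl fun n _ => show
      F n + G (n + 1) - F (n + 1) - G n = (F n - F (n + 1)) - (G n - G (n + 1)) by ring]
    rw [Finset.sum_sub_distrib, Finset.sum_range_sub' F T, Finset.sum_range_sub' G T]
    ring
  rw [htel]
  rw [condMutInfo_eq hμ]
  have hF0 : F 0 = ent μ (fun ω => (ω.2.1, ω.1)) := by
    refine ent_congr fun ω ω' => ?_
    simp only [Prod.ext_iff, Prev_zero]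
    tauto
  have hG0 : G 0 = ent μ (fun ω => ω.1) := by
    refine ent_congr fun ω ω' => ?_
    simp only [Prod.ext_iff, Prev_zero]
    tauto
  have hFT : F T = ent μ (fun ω => ((ω.2.1, ω.2.2), ω.1)) := by
    refine ent_congr fun ω ω' => ?_
    simp only [Prod.ext_iff, Prev_top_iff]
    tauto
  have hGT : G T = ent μ (fun ω => (ω.2.2, ω.1)) := by
    refine ent_congr fun ω ω' => ?_
    simp only [Prod.ext_iff, Prev_top_iff]
    tauto
  linarith [hF0, hG0, hFT, hGT]

lemma step3 [Inhabited Y] (hν : ∀ k, IsPmf (ν k))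
    (hμ : IsPmf (geniePmf N K l T Y ν x)) (t : Fin T) :
    condMutInfo (geniePmf N K l T Y ν x)
        (fun ω => ω.2.1) (fun ω => ω.2.2 t)
        (fun ω => (ω.1, Prev (t : ℕ) ω.2.2))
      ≤ condMutInfo (geniePmf N K l T Y ν x)
          (fun ω => XS (ω.2.1.val \ ω.1.val) (x t (prevOut ω.2.2 t)))
          (fun ω => ω.2.2 t)
          (fun ω => XS ω.1.val (x t (prevOut ω.2.2 t))) := by
  set μ := geniePmf N K l T Y ν x with hμdef
  rw [condMutInfo_eq hμ, condMutInfo_eq hμ]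
  -- sufficiency
  have hsuff := suff_lemma (μ := μ)
    (W := fun ω => (ω.2.1, (ω.1, Prev (t : ℕ) ω.2.2)))
    (Yv := fun ω => ω.2.2 t)
    (φ := fun w => (XS (w.1.val \ w.2.1.val) (x t (extOut t w.2.2)),
      XS w.2.1.val (x t (extOut t w.2.2))))
    (q := fun d c => ν (mOne d.1.2 + mOne d.2.2) c)
    (fun d => (hν _).2)
    (fun w c => genie_joint hν t w c)
  dsimp only at hsuff
  simp only [extOut_Prev] at hsuff
  -- hsuff : ent μ (fun ω => ((ω.2.1, (ω.1, Prev ↑t ω.2.2)), ω.2.2 t))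
  --   - ent μ (fun ω => (ω.2.1, (ω.1, Prev ↑t ω.2.2)))
  --   = ent μ (fun ω => ((XS .., XS ..), ω.2.2 t)) - ent μ (fun ω => (XS .., XS ..))
  have hA : ent μ (fun ω => ((ω.2.1, (ω.1, Prev (t : ℕ) ω.2.2)), ω.2.2 t))
      = ent μ (fun ω => ((ω.2.1, ω.2.2 t), (ω.1, Prev (t : ℕ) ω.2.2))) := by
    refine ent_congr fun ω ω' => ?_
    simp only [Prod.ext_iff]
    tauto
  have hB : ent μ (fun ω =>
        ((XS (ω.2.1.val \ ω.1.val) (x t (prevOut ω.2.2 t)), ω.2.2 t),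
          XS ω.1.val (x t (prevOut ω.2.2 t))))
      = ent μ (fun ω =>
        ((XS (ω.2.1.val \ ω.1.val) (x t (prevOut ω.2.2 t)),
          XS ω.1.val (x t (prevOut ω.2.2 t))), ω.2.2 t)) := by
    refine ent_congr fun ω ω' => ?_
    simp only [Prod.ext_iff]
    tauto
  -- determinism of the pool from (𝓛, prefix)
  have hdet : ∀ ω ω' : KSets N l × KSets N K × (Fin T → Y),
      (ω.1, Prev (t : ℕ) ω.2.2) = (ω'.1, Prev (t : ℕ) ω'.2.2) →
      XS ω.1.val (x t (prevOut ω.2.2 t)) = XS ω'.1.val (x t (prevOut ω'.2.2 t)) := by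
    intro ω ω' h
    have h1 := congrArg Prod.fst h
    have h2 := congrArg Prod.snd h
    dsimp only at h1 h2
    have hp : prevOut ω.2.2 t = prevOut ω'.2.2 t := by
      rw [← extOut_Prev t ω.2.2, ← extOut_Prev t ω'.2.2, h2]
    rw [h1, hp]
  have hdp : ent μ (fun ω => (((ω.1, Prev (t : ℕ) ω.2.2), ω.2.2 t),
        XS ω.1.val (x t (prevOut ω.2.2 t))))
        + ent μ (fun ω => XS ω.1.val (x t (prevOut ω.2.2 t)))
      ≤ ent μ (fun ω => ((ω.1, Prev (t : ℕ) ω.2.2),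
          XS ω.1.val (x t (prevOut ω.2.2 t))))
        + ent μ (fun ω => (ω.2.2 t, XS ω.1.val (x t (prevOut ω.2.2 t)))) :=
    ssa hμ (fun ω => (ω.1, Prev (t : ℕ) ω.2.2)) (fun ω => ω.2.2 t)
      (fun ω => XS ω.1.val (x t (prevOut ω.2.2 t)))
  have hC : ent μ (fun ω => (((ω.1, Prev (t : ℕ) ω.2.2), ω.2.2 t),
        XS ω.1.val (x t (prevOut ω.2.2 t))))
      = ent μ (fun ω => (ω.2.2 t, (ω.1, Prev (t : ℕ) ω.2.2))) := by
    refine ent_congr fun ω ω' => ?_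
    constructor
    · intro h
      have h1 := congrArg (fun z : ((KSets N l × (Fin T → Option Y)) × Y) ×
        (Finset (Fin N) × (Fin N → Option Bool)) => z.1.1) h
      have h2 := congrArg (fun z : ((KSets N l × (Fin T → Option Y)) × Y) ×
        (Finset (Fin N) × (Fin N → Option Bool)) => z.1.2) h
      dsimp only at h1 h2
      exact Prod.ext h2 h1
    · intro h
      have h2 := congrArg Prod.fst h
      have h1 := congrArg Prod.snd h
      dsimp only at h1 h2
      exact Prod.ext (Prod.ext h1 h2) (hdet ω ω' h1)
  have hD : ent μ (fun ω => ((ω.1, Prev (t : ℕ) ω.2.2),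
        XS ω.1.val (x t (prevOut ω.2.2 t))))
      = ent μ (fun ω => (ω.1, Prev (t : ℕ) ω.2.2)) := by
    refine ent_congr fun ω ω' => ?_
    constructor
    · intro h
      have h1 := congrArg Prod.fst h
      dsimp only at h1
      exact h1
    · intro h1
      exact Prod.ext h1 (hdet ω ω' h1)
  linarith [hsuff, hA, hB, hdp, hC, hD]

lemma condMutInfo_of_isEmpty {Ω α β γ : Type*} [Fintype Ω] [IsEmpty Ω]
    [Fintype α] [Fintype β] (μ : Ω → ℝ) (X : Ω → α) (Yv : Ω → β) (Z : Ω → γ) :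
    condMutInfo μ X Yv Z = 0 := by
  unfold condMutInfo
  rw [Finset.univ_eq_empty, Finset.image_empty, Finset.sum_empty]

end FinalLib
/-- In the adaptive group testing model with the genie construction of `𝓛` and
`𝒦`, and an estimator `K̂ = K̂(Y_1,…,Y_T)`,
`I(𝒦 : K̂ ∣ 𝓛) ≤ Σ_{t=1}^T I( X_{𝒦∖𝓛,t} : Y_t ∣ X_{𝓛,t} )`. -/
theorem mutual_info_le_sum_conditional_mutual_info
    (N K l T : ℕ) (hlK : l < K) (hKN : K ≤ N) (Y : Type*) [Fintype Y]
    (ν : ℕ → Y → ℝ) (hν : ∀ k, IsPmf (ν k))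
    (x : (t : Fin T) → (Fin t.val → Y) → Fin N → Bool)
    (Khat : (Fin T → Y) → KSets N K) :
    condMutInfo (geniePmf N K l T Y ν x)
        (fun ω => ω.2.1) (fun ω => Khat ω.2.2) (fun ω => ω.1)
      ≤ ∑ t : Fin T,
          condMutInfo (geniePmf N K l T Y ν x)
            (fun ω => XS (ω.2.1.val \ ω.1.val) (x t (prevOut ω.2.2 t)))
            (fun ω => ω.2.2 t)
            (fun ω => XS ω.1.val (x t (prevOut ω.2.2 t))) := by
  classical
  by_cases hY : Nonempty Y
  · haveI : Inhabited Y := Classical.inhabited_of_nonempty hY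
    have hμ : IsPmf (geniePmf N K l T Y ν x) :=
      genie_isPmf hν hlK hKN (fun _ => default)
    calc condMutInfo (geniePmf N K l T Y ν x)
          (fun ω => ω.2.1) (fun ω => Khat ω.2.2) (fun ω => ω.1)
        ≤ condMutInfo (geniePmf N K l T Y ν x)
            (fun ω => ω.2.1) (fun ω => ω.2.2) (fun ω => ω.1) := step1 hμ Khat
      _ = ∑ t : Fin T, condMutInfo (geniePmf N K l T Y ν x)
            (fun ω => ω.2.1) (fun ω => ω.2.2 t)
            (fun ω => (ω.1, Prev (t : ℕ) ω.2.2)) := step2 hμ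
      _ ≤ ∑ t : Fin T,
            condMutInfo (geniePmf N K l T Y ν x)
              (fun ω => XS (ω.2.1.val \ ω.1.val) (x t (prevOut ω.2.2 t)))
              (fun ω => ω.2.2 t)
              (fun ω => XS ω.1.val (x t (prevOut ω.2.2 t))) :=
          Finset.sum_le_sum fun t _ => step3 hν hμ t
  · by_cases hT : T = 0
    · subst hT
      have hμ : IsPmf (geniePmf N K l 0 Y ν x) :=
        genie_isPmf hν hlK hKN (fun s => s.elim0)
      have h1 := step1 hμ Khat
      have h2 := step2 hμ
      rw [h2] at h1
      simpa using h1
    · haveI hE : IsEmpty (Fin T → Y) :=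
      ⟨fun f => hY ⟨f ⟨0, Nat.pos_of_ne_zero hT⟩⟩⟩
      haveI : IsEmpty (KSets N l × KSets N K × (Fin T → Y)) :=
        ⟨fun ω => hE.false ω.2.2⟩
      rw [condMutInfo_of_isEmpty]
      refine Finset.sum_nonneg fun t _ => ?_
      rw [condMutInfo_of_isEmpty]
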